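/- arXiv:2506.04188 — 5 statements merged into one kernel-verified Lean document; each statement's English description precedes it below -/
import Mathlib

section
/- Let 0 < α < 1, L > 0, M > 0 and ε > 0. Let φ be a continuous nonnegative function on [0,∞) satisfying φ(t) ≤ (L/Γ(α)) ∫_0^t (t−s)^{α−1} φ(s) ds + ε M (1 + t^α) for all t ≥ 0, and let u be a continuous nonnegative function on [0,∞) with u(t) = (L/Γ(α)) ∫_0^t (t−s)^{α−1} u(s) ds + M (1 + t^α) for all t ≥ 0. Then φ(t) ≤ ε u(t) for all t ≥ 0. -/
open MeasureTheory Real Set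

/-- Interval integrability of the singular kernel against a continuous function. -/
lemma frac_ker_intble (α : ℝ) (hα0 : 0 < α) (t : ℝ) (ht : 0 ≤ t)
    (f : ℝ → ℝ) (hf : ContinuousOn f (Set.Ici 0)) :
    IntervalIntegrable (fun s => (t - s) ^ (α - 1) * f s) volume 0 t := by
  have hker : IntervalIntegrable (fun s : ℝ => (t - s) ^ (α - 1)) volume 0 t := by
    have h1 : IntervalIntegrable (fun s : ℝ => s ^ (α - 1)) volume 0 t :=
      intervalIntegral.intervalIntegrable_rpow' (by linarith)
    simpa using (h1.comp_sub_left t).symm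
  apply hker.mul_continuousOn
  apply hf.mono
  rw [Set.uIcc_of_le ht]
  exact fun x hx => hx.1

/-- **Fractional Gronwall-type comparison.** If a continuous nonnegative `φ` satisfies the
fractional integral inequality with inhomogeneity `ε M (1 + t^α)`, and `u` solves the
corresponding comparison equation with inhomogeneity `M (1 + t^α)`, then `φ t ≤ ε u t`. -/
theorem fractional_gronwall_comparison
    (α L M ε : ℝ) (hα0 : 0 < α) (hα1 : α < 1) (hL : 0 < L) (hM : 0 < M) (hε : 0 < ε)
    (φ : ℝ → ℝ) (hφ_cont : ContinuousOn φ (Set.Ici 0))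
    (hφ_nonneg : ∀ t ≥ (0:ℝ), 0 ≤ φ t)
    (hφ : ∀ t ≥ (0:ℝ),
      φ t ≤ (L / Real.Gamma α) * (∫ s in (0:ℝ)..t, (t - s) ^ (α - 1) * φ s)
            + ε * M * (1 + t ^ α))
    (u : ℝ → ℝ) (hu_cont : ContinuousOn u (Set.Ici 0))
    (hu_nonneg : ∀ t ≥ (0:ℝ), 0 ≤ u t)
    (hu : ∀ t ≥ (0:ℝ),
      u t = (L / Real.Gamma α) * (∫ s in (0:ℝ)..t, (t - s) ^ (α - 1) * u s)
            + M * (1 + t ^ α)) :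
    ∀ t ≥ (0:ℝ), φ t ≤ ε * u t := by
  have hΓ : 0 < Real.Gamma α := Real.Gamma_pos_of_pos hα0
  have hLΓ : 0 ≤ L / Real.Gamma α := le_of_lt (div_pos hL hΓ)
  -- Key claim: for each δ > 0, φ t < (1+δ) * ε * u t on [0,∞)
  have key : ∀ δ > (0:ℝ), ∀ t ≥ (0:ℝ), φ t < (1 + δ) * ε * u t := by
    intro δ hδ
    by_contra hcon
    push_neg at hcon
    obtain ⟨T, hT0, hTle⟩ := hcon
    set v : ℝ → ℝ := fun t => (1 + δ) * ε * u t with hv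
    set S : Set ℝ := {t | t ∈ Set.Ici (0:ℝ) ∧ v t ≤ φ t} with hS
    have hSne : S.Nonempty := ⟨T, hT0, hTle⟩
    have hSbdd : BddBelow S := ⟨0, fun x hx => hx.1⟩
    have hScl : IsClosed S := by
      have hc : ContinuousOn (fun t => φ t - v t) (Set.Ici 0) :=
        hφ_cont.sub ((continuousOn_const).mul hu_cont)
      have : S = Set.Ici (0:ℝ) ∩ (fun t => φ t - v t) ⁻¹' (Set.Ici 0) := by
        ext x; simp [hS, sub_nonneg, and_comm]
      rw [this]
      exact hc.preimage_isClosed_of_isClosed isClosed_Ici isClosed_Ici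
    set t₀ := sInf S with ht₀
    have ht₀S : t₀ ∈ S := hScl.csInf_mem hSne hSbdd
    have ht₀0 : 0 ≤ t₀ := ht₀S.1
    have hlt : ∀ s, 0 ≤ s → s < t₀ → φ s < v s := by
      intro s hs0 hst
      by_contra h
      push_neg at h
      exact absurd (csInf_le hSbdd ⟨hs0, h⟩) (not_le.mpr hst)
    -- pointwise comparison of integrands on [0, t₀]
    have hptwise : ∀ s ∈ Set.Icc (0:ℝ) t₀,
        (t₀ - s) ^ (α - 1) * φ s ≤ (t₀ - s) ^ (α - 1) * v s := by
      intro s hs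
      rcases eq_or_lt_of_le hs.2 with heq | hlt'
      · subst heq
        simp [Real.zero_rpow (by linarith : α - 1 ≠ 0)]
      · have hker : 0 ≤ (t₀ - s) ^ (α - 1) :=
          Real.rpow_nonneg (by linarith [hs.2]) _
        exact mul_le_mul_of_nonneg_left (le_of_lt (hlt s hs.1 hlt')) hker
    have hintφ := frac_ker_intble α hα0 t₀ ht₀0 φ hφ_cont
    have hintu := frac_ker_intble α hα0 t₀ ht₀0 u hu_cont
    have hintv : IntervalIntegrable (fun s => (t₀ - s) ^ (α - 1) * v s) volume 0 t₀ := by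
      have h := hintu.const_mul ((1 + δ) * ε)
      refine h.congr (fun s _ => ?_)
      simp only [hv]; ring
    have hmono : (∫ s in (0:ℝ)..t₀, (t₀ - s) ^ (α - 1) * φ s)
        ≤ ∫ s in (0:ℝ)..t₀, (t₀ - s) ^ (α - 1) * v s :=
      intervalIntegral.integral_mono_on ht₀0 hintφ hintv hptwise
    have hvint : (∫ s in (0:ℝ)..t₀, (t₀ - s) ^ (α - 1) * v s)
        = (1 + δ) * ε * ∫ s in (0:ℝ)..t₀, (t₀ - s) ^ (α - 1) * u s := by
      rw [← intervalIntegral.integral_const_mul]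
      congr 1; funext s; simp [hv]; ring
    have hpos : 0 < ε * M * (1 + t₀ ^ α) := by
      have : 0 ≤ t₀ ^ α := Real.rpow_nonneg ht₀0 _
      positivity
    have hδ' : ε * M * (1 + t₀ ^ α) < (1 + δ) * ε * (M * (1 + t₀ ^ α)) := by
      have h1 : ε * M * (1 + t₀ ^ α) = 1 * (ε * M * (1 + t₀ ^ α)) := by ring
      have h2 : (1 + δ) * ε * (M * (1 + t₀ ^ α)) = (1 + δ) * (ε * M * (1 + t₀ ^ α)) := by ring
      rw [h1, h2]
      exact mul_lt_mul_of_pos_right (by linarith) hpos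
    have hfinal : φ t₀ < v t₀ := by
      calc φ t₀ ≤ (L / Real.Gamma α) * (∫ s in (0:ℝ)..t₀, (t₀ - s) ^ (α - 1) * φ s)
            + ε * M * (1 + t₀ ^ α) := hφ t₀ ht₀0
        _ ≤ (L / Real.Gamma α) * (∫ s in (0:ℝ)..t₀, (t₀ - s) ^ (α - 1) * v s)
            + ε * M * (1 + t₀ ^ α) := by
              gcongr
        _ < (L / Real.Gamma α) * (∫ s in (0:ℝ)..t₀, (t₀ - s) ^ (α - 1) * v s)
            + (1 + δ) * ε * (M * (1 + t₀ ^ α)) := by linarith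
        _ = v t₀ := by
              rw [hvint, hv]
              simp only
              rw [hu t₀ ht₀0]
              ring
    exact absurd ht₀S.2 (not_le.mpr hfinal)
  -- pass to the limit δ → 0
  intro t ht
  by_contra h
  push_neg at h
  have hut : 0 ≤ u t := hu_nonneg t ht
  -- choose δ with (1+δ) ε u t < φ t ... need: for all δ, φ t < (1+δ) ε u t, contradiction as δ → 0
  have h1 : ∀ δ > (0:ℝ), φ t < (1 + δ) * ε * u t := fun δ hδ => key δ hδ t ht
  have h2 : φ t ≤ ε * u t := by
    have : Filter.Tendsto (fun δ : ℝ => (1 + δ) * ε * u t) (nhdsWithin 0 (Set.Ioi 0))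
        (nhds ((1 + 0) * ε * u t)) := by
      apply Filter.Tendsto.mono_left _ nhdsWithin_le_nhds
      exact (((continuous_const.add continuous_id).mul continuous_const).mul
        continuous_const).tendsto 0
    have := ge_of_tendsto this (by
      filter_upwards [self_mem_nhdsWithin] with δ hδ
      exact le_of_lt (h1 δ hδ))
    simpa using this
  exact absurd h2 (not_le.mpr h)
end

section
/- Let 0 < α < 1, h > 0, t > 0 and let M be an integer such that t e^{Mh} ≤ 1 − α. Then h (sin(πα)/π) Σ_{i=−∞}^{M−1} e^{(1−α)ih} e^{−e^{ih} t} ≤ (t^{α−1}/Γ(α)) · (1 − Γ(1−α, t e^{Mh})/Γ(1−α)). -/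
open MeasureTheory Real Set

/-- The upper incomplete Gamma function `Γ(s, x) = ∫_x^∞ e^{-σ} σ^{s-1} dσ`. -/
noncomputable def upperGamma (s x : ℝ) : ℝ :=
  ∫ σ in Set.Ioi x, Real.exp (-σ) * σ ^ (s - 1)

section aux

variable {α h t : ℝ} {M : ℤ}

lemma aux_mono (ht : 0 < t)
    (hM : t * Real.exp ((M : ℝ) * h) ≤ 1 - α) :
    MonotoneOn (fun s : ℝ => Real.exp ((1 - α) * s) * Real.exp (-Real.exp s * t))
      (Set.Iic ((M : ℝ) * h)) := by
  have key : MonotoneOn (fun s : ℝ => (1 - α) * s - Real.exp s * t) (Set.Iic ((M : ℝ) * h)) := by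
    apply monotoneOn_of_deriv_nonneg (convex_Iic _)
    · fun_prop
    · intro x hx
      exact ((differentiable_id.const_mul _).sub
        ((Real.differentiable_exp).mul_const t)).differentiableAt.differentiableWithinAt
    · intro x hx
      rw [interior_Iic] at hx
      have hd : HasDerivAt (fun s : ℝ => (1 - α) * s - Real.exp s * t)
          ((1 - α) * 1 - Real.exp x * t) x :=
        ((hasDerivAt_id x).const_mul (1 - α)).sub ((Real.hasDerivAt_exp x).mul_const t)
      rw [hd.deriv]
      have : t * Real.exp x ≤ t * Real.exp ((M : ℝ) * h) :=
        mul_le_mul_of_nonneg_left (Real.exp_le_exp.2 (le_of_lt hx)) ht.le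
      nlinarith
  intro a ha b hb hab
  have h2 := key ha hb hab
  dsimp only at h2
  simp only [← Real.exp_add]
  apply Real.exp_le_exp.2
  linarith

lemma aux_union (hh : 0 < h) :
    (⋃ i : {i : ℤ // i < M}, Set.Ioc (((i : ℤ) : ℝ) * h) ((((i : ℤ) : ℝ) + 1) * h))
      = Set.Iic ((M : ℝ) * h) := by
  ext y
  simp only [Set.mem_iUnion, Set.mem_Ioc, Set.mem_Iic, Subtype.exists]
  constructor
  · rintro ⟨i, hi, h1, h2⟩
    have : ((i : ℝ) + 1) ≤ (M : ℝ) := by exact_mod_cast hi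
    calc y ≤ ((i : ℝ) + 1) * h := h2
      _ ≤ (M : ℝ) * h := mul_le_mul_of_nonneg_right this hh.le
  · intro hy
    refine ⟨⌈y / h⌉ - 1, ?_, ?_, ?_⟩
    · have h1 : ((⌈y / h⌉ : ℝ) - 1) < y / h := by
        have := Int.ceil_lt_add_one (y / h)
        linarith
      have h2 : ((⌈y / h⌉ : ℝ) - 1) * h < y := by
        rw [← lt_div_iff₀ hh] at *
        exact h1
      have h3 : ((⌈y / h⌉ : ℝ) - 1) * h < (M : ℝ) * h := lt_of_lt_of_le h2 hy
      have h4 : ((⌈y / h⌉ : ℝ) - 1) < (M : ℝ) := lt_of_mul_lt_mul_right h3 hh.le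
      exact_mod_cast h4
    · push_cast
      have h1 : ((⌈y / h⌉ : ℝ) - 1) < y / h := by
        have := Int.ceil_lt_add_one (y / h)
        linarith
      calc ((⌈y / h⌉ : ℝ) - 1) * h < y / h * h := by
            exact mul_lt_mul_of_pos_right h1 hh
        _ = y := by field_simp
    · push_cast
      have h1 : y / h ≤ (⌈y / h⌉ : ℝ) := Int.le_ceil _
      calc y = y / h * h := by field_simp
        _ ≤ (⌈y / h⌉ : ℝ) * h := mul_le_mul_of_nonneg_right h1 hh.le
        _ = ((⌈y / h⌉ : ℝ) - 1 + 1) * h := by ring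

end aux

/-- **Lower truncation error of the trapezoidal series.** If `t e^{Mh} ≤ 1 - α`, the lower
tail (indices `i < M`) of the trapezoidal approximation of the fractional kernel is bounded
by `(t^(α-1)/Γ(α)) (1 - Γ(1-α, t e^{Mh})/Γ(1-α))`. -/
theorem lower_truncation_error
    (α h t : ℝ) (M : ℤ) (hα0 : 0 < α) (hα1 : α < 1) (hh : 0 < h) (ht : 0 < t)
    (hM : t * Real.exp ((M : ℝ) * h) ≤ 1 - α) :
    h * (Real.sin (Real.pi * α) / Real.pi) *
        ∑' i : {i : ℤ // i < M},
          Real.exp ((1 - α) * (((i : ℤ) : ℝ) * h)) * Real.exp (-Real.exp (((i : ℤ) : ℝ) * h) * t)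
      ≤ (t ^ (α - 1) / Real.Gamma α) *
          (1 - upperGamma (1 - α) (t * Real.exp ((M : ℝ) * h)) / Real.Gamma (1 - α)) := by
  have hs1α : 0 < 1 - α := by linarith
  set g : ℝ → ℝ := fun s => Real.exp ((1 - α) * s) * Real.exp (-Real.exp s * t) with hg
  set x : ℝ := t * Real.exp ((M : ℝ) * h) with hx
  have hx0 : 0 < x := mul_pos ht (Real.exp_pos _)
  have hmono := aux_mono ht hM
  rw [← hg] at hmono
  set G : ℝ → ℝ := fun σ => Real.exp (-σ) * σ ^ (1 - α - 1) with hG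
  have hgcont : Continuous g := by fun_prop
  -- change of variables
  have himg : (fun u => t * Real.exp u) '' Set.Iic ((M : ℝ) * h) = Set.Ioc 0 x := by
    ext σ
    constructor
    · rintro ⟨u, hu, rfl⟩
      exact ⟨mul_pos ht (Real.exp_pos _), mul_le_mul_of_nonneg_left (Real.exp_le_exp.2 hu) ht.le⟩
    · rintro ⟨h0, hle⟩
      refine ⟨Real.log (σ / t), ?_, ?_⟩
      · rw [Set.mem_Iic, Real.log_le_iff_le_exp (div_pos h0 ht), div_le_iff₀ ht]
        rw [hx] at hle; linarith
      · show t * Real.exp (Real.log (σ / t)) = σ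
        rw [Real.exp_log (div_pos h0 ht)]
        field_simp
  have hderiv : ∀ u ∈ Set.Iic ((M : ℝ) * h),
      HasDerivWithinAt (fun u => t * Real.exp u) (t * Real.exp u) (Set.Iic ((M : ℝ) * h)) u :=
    fun u _ => ((Real.hasDerivAt_exp u).const_mul t).hasDerivWithinAt
  have hinj : Set.InjOn (fun u => t * Real.exp u) (Set.Iic ((M : ℝ) * h)) := by
    intro a _ b _ hab
    simpa using Real.exp_injective (mul_left_cancel₀ ht.ne' hab)
  have jac : ∀ u : ℝ, |t * Real.exp u| • G (t * Real.exp u) = t ^ (1 - α) * g u := by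
    intro u
    have hpos : (0 : ℝ) < t * Real.exp u := mul_pos ht (Real.exp_pos _)
    rw [abs_of_pos hpos]
    simp only [hG, hg, smul_eq_mul]
    have e1 : (t * Real.exp u) * (Real.exp (-(t * Real.exp u)) * (t * Real.exp u) ^ (1 - α - 1))
        = (t * Real.exp u) ^ (1 - α) * Real.exp (-(t * Real.exp u)) := by
      rw [show (1 - α : ℝ) = 1 + (1 - α - 1) by ring, Real.rpow_add hpos, Real.rpow_one]
      ring
    rw [e1, Real.mul_rpow ht.le (Real.exp_pos u).le, ← Real.exp_mul]
    ring_nf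
  have hGIoc : IntegrableOn G (Set.Ioc 0 x) :=
    (Real.GammaIntegral_convergent hs1α).mono_set Set.Ioc_subset_Ioi_self
  have hgint : IntegrableOn g (Set.Iic ((M : ℝ) * h)) := by
    have h1 : IntegrableOn (fun u => |t * Real.exp u| • G (t * Real.exp u))
        (Set.Iic ((M : ℝ) * h)) := by
      rw [← integrableOn_image_iff_integrableOn_abs_deriv_smul measurableSet_Iic hderiv hinj G]
      rw [himg]; exact hGIoc
    have h2 : IntegrableOn (fun u => t ^ (1 - α) * g u) (Set.Iic ((M : ℝ) * h)) :=
      h1.congr_fun (fun u _ => jac u) measurableSet_Iic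
    have h3 : IntegrableOn (fun u => t ^ (α - 1) * (t ^ (1 - α) * g u))
        (Set.Iic ((M : ℝ) * h)) := h2.const_mul (t ^ (α - 1))
    apply h3.congr_fun _ measurableSet_Iic
    intro u _
    dsimp only
    rw [← mul_assoc, ← Real.rpow_add ht]
    norm_num
  have hchg : ∫ σ in Set.Ioc 0 x, G σ = t ^ (1 - α) * ∫ u in Set.Iic ((M : ℝ) * h), g u := by
    rw [← himg, integral_image_eq_integral_abs_deriv_smul measurableSet_Iic hderiv hinj G]
    rw [← integral_const_mul]
    exact setIntegral_congr_fun measurableSet_Iic fun u _ => jac u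
  -- the series bound
  set S : {i : ℤ // i < M} → Set ℝ :=
    fun i => Set.Ioc (((i : ℤ) : ℝ) * h) ((((i : ℤ) : ℝ) + 1) * h) with hS
  have hSmeas : ∀ i, MeasurableSet (S i) := fun i => measurableSet_Ioc
  have hSdisj : Pairwise (Function.onFun Disjoint S) := by
    intro i j hij
    rcases lt_or_gt_of_ne (fun hc => hij (Subtype.ext hc)) with hlt | hlt
    · apply Set.disjoint_left.2
      rintro y ⟨_, hy2⟩ ⟨hy3, _⟩
      have : ((i : ℤ) : ℝ) + 1 ≤ ((j : ℤ) : ℝ) := by exact_mod_cast hlt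
      have := mul_le_mul_of_nonneg_right this hh.le
      linarith
    · apply Set.disjoint_left.2
      rintro y ⟨hy1, _⟩ ⟨_, hy4⟩
      have : ((j : ℤ) : ℝ) + 1 ≤ ((i : ℤ) : ℝ) := by exact_mod_cast hlt
      have := mul_le_mul_of_nonneg_right this hh.le
      linarith
  have hUnion : (⋃ i, S i) = Set.Iic ((M : ℝ) * h) := aux_union hh
  have hUint : IntegrableOn g (⋃ i, S i) := hUnion ▸ hgint
  have hHasSum : HasSum (fun i => ∫ u in S i, g u) (∫ u in Set.Iic ((M : ℝ) * h), g u) := by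
    have := hasSum_integral_iUnion hSmeas hSdisj hUint
    rwa [hUnion] at this
  have key1 : ∀ i : {i : ℤ // i < M}, h * g (((i : ℤ) : ℝ) * h) ≤ ∫ u in S i, g u := by
    intro i
    have hiM : (((i : ℤ) : ℝ) + 1) * h ≤ (M : ℝ) * h := by
      have : ((i : ℤ) : ℝ) + 1 ≤ (M : ℝ) := by exact_mod_cast i.2
      exact mul_le_mul_of_nonneg_right this hh.le
    have hc := setIntegral_ge_of_const_le (c := g (((i : ℤ) : ℝ) * h)) (measurableSet_Ioc)
      (by rw [Real.volume_Ioc]; exact ENNReal.ofReal_ne_top)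
      (fun y hy => hmono (Set.mem_Iic.2 (by nlinarith [hy.1.le, hy.2]))
        (Set.mem_Iic.2 (le_trans hy.2 hiM)) hy.1.le)
      (hgcont.integrableOn_Ioc)
    rw [measureReal_def, Real.volume_Ioc, ENNReal.toReal_ofReal (by nlinarith : (0:ℝ) ≤ (((i : ℤ) : ℝ) + 1) * h - ((i : ℤ) : ℝ) * h), smul_eq_mul, mul_comm _ (g _)] at hc
    calc h * g (((i : ℤ) : ℝ) * h) = g (((i : ℤ) : ℝ) * h) * ((((i : ℤ) : ℝ) + 1) * h - ((i : ℤ) : ℝ) * h) := by ring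
      _ ≤ ∫ u in S i, g u := hc
  have hsumI : Summable (fun i => ∫ u in S i, g u) := hHasSum.summable
  have hsumL : Summable (fun i : {i : ℤ // i < M} => h * g (((i : ℤ) : ℝ) * h)) :=
    Summable.of_nonneg_of_le (fun i => by positivity) key1 hsumI
  have hseries : h * (∑' i : {i : ℤ // i < M}, g (((i : ℤ) : ℝ) * h))
      ≤ ∫ u in Set.Iic ((M : ℝ) * h), g u := by
    rw [← tsum_mul_left]
    calc (∑' i : {i : ℤ // i < M}, h * g (((i : ℤ) : ℝ) * h))
        ≤ ∑' i, ∫ u in S i, g u := Summable.tsum_le_tsum key1 hsumL hsumI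
      _ = ∫ u in Set.Iic ((M : ℝ) * h), g u := hHasSum.tsum_eq
  -- Gamma split
  have hGIoi : IntegrableOn G (Set.Ioi x) :=
    (Real.GammaIntegral_convergent hs1α).mono_set (Set.Ioi_subset_Ioi hx0.le)
  have hsplit : Real.Gamma (1 - α) = (∫ σ in Set.Ioc 0 x, G σ) + upperGamma (1 - α) x := by
    rw [Real.Gamma_eq_integral hs1α, ← Set.Ioc_union_Ioi_eq_Ioi hx0.le,
      setIntegral_union (Set.Ioc_disjoint_Ioi le_rfl) measurableSet_Ioi hGIoc hGIoi]
    rfl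
  -- positivity facts
  have hsin : 0 < Real.sin (Real.pi * α) := by
    apply Real.sin_pos_of_pos_of_lt_pi (by positivity)
    calc Real.pi * α < Real.pi * 1 := by
          exact mul_lt_mul_of_pos_left hα1 Real.pi_pos
      _ = Real.pi := mul_one _
  have hGA : 0 < Real.Gamma α := Real.Gamma_pos_of_pos hα0
  have hG1 : 0 < Real.Gamma (1 - α) := Real.Gamma_pos_of_pos hs1α
  have hrefl := Real.Gamma_mul_Gamma_one_sub α
  -- assemble
  have hU : upperGamma (1 - α) x = Real.Gamma (1 - α) - t ^ (1 - α) * ∫ u in Set.Iic ((M : ℝ) * h), g u := by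
    rw [hsplit, hchg]; ring
  have hstep : h * (Real.sin (Real.pi * α) / Real.pi) *
      (∑' i : {i : ℤ // i < M}, g (((i : ℤ) : ℝ) * h))
      ≤ (Real.sin (Real.pi * α) / Real.pi) * ∫ u in Set.Iic ((M : ℝ) * h), g u := by
    have hc : 0 ≤ Real.sin (Real.pi * α) / Real.pi := by positivity
    calc h * (Real.sin (Real.pi * α) / Real.pi) *
        (∑' i : {i : ℤ // i < M}, g (((i : ℤ) : ℝ) * h))
        = (Real.sin (Real.pi * α) / Real.pi) *
          (h * ∑' i : {i : ℤ // i < M}, g (((i : ℤ) : ℝ) * h)) := by ring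
      _ ≤ _ := mul_le_mul_of_nonneg_left hseries hc
  refine le_trans hstep (le_of_eq ?_)
  -- equality of the right-hand sides
  set I : ℝ := ∫ u in Set.Iic ((M : ℝ) * h), g u with hI
  rw [hU]
  have hπ : Real.pi ≠ 0 := Real.pi_ne_zero
  have ht1 : t ^ (α - 1) * t ^ (1 - α) = 1 := by
    rw [← Real.rpow_add ht]; norm_num
  have hπeq : Real.sin (Real.pi * α) = Real.pi / (Real.Gamma α * Real.Gamma (1 - α)) := by
    rw [eq_div_iff (by positivity), hrefl]
    field_simp
  have e2 : t ^ (α - 1) / Real.Gamma α *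
      (1 - (Real.Gamma (1 - α) - t ^ (1 - α) * I) / Real.Gamma (1 - α))
      = (t ^ (α - 1) * t ^ (1 - α)) * I / (Real.Gamma α * Real.Gamma (1 - α)) := by
    field_simp
    ring
  rw [e2, ht1, hπeq, one_mul]
  field_simp
end

section
/- Let 0 < α < 1, h > 0, t > 0 and let N be an integer such that t e^{(N−1)h} ≥ 1 − α. Then h (sin(πα)/π) Σ_{i=N}^{∞} e^{(1−α)ih} e^{−e^{ih} t} ≤ (t^{α−1}/Γ(α)) · Γ(1−α, t e^{(N−1)h})/Γ(1−α). -/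
open MeasureTheory Real Set

/-- Auxiliary equivalence reindexing `{i : ℤ // N ≤ i}` by `ℕ`. -/
def shiftEquivNat (N : ℤ) : ℕ ≃ {i : ℤ // N ≤ i} where
  toFun n := ⟨N + n, le_add_of_nonneg_right (Int.natCast_nonneg n)⟩
  invFun i := (i.1 - N).toNat
  left_inv n := by simp
  right_inv i := Subtype.ext (by simp [Int.toNat_of_nonneg (sub_nonneg.mpr i.2)])

/-- **Upper truncation error of the trapezoidal series.** If `t e^{(N-1)h} ≥ 1 - α`, the
upper tail (indices `i ≥ N`) of the trapezoidal approximation of the fractional kernel is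
bounded by `(t^(α-1)/Γ(α)) · Γ(1-α, t e^{(N-1)h})/Γ(1-α)`. -/
theorem upper_truncation_error
    (α h t : ℝ) (N : ℤ) (hα0 : 0 < α) (hα1 : α < 1) (hh : 0 < h) (ht : 0 < t)
    (hN : 1 - α ≤ t * Real.exp (((N : ℝ) - 1) * h)) :
    h * (Real.sin (Real.pi * α) / Real.pi) *
        ∑' i : {i : ℤ // N ≤ i},
          Real.exp ((1 - α) * (((i : ℤ) : ℝ) * h)) * Real.exp (-Real.exp (((i : ℤ) : ℝ) * h) * t)
      ≤ (t ^ (α - 1) / Real.Gamma α) *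
          (upperGamma (1 - α) (t * Real.exp (((N : ℝ) - 1) * h)) / Real.Gamma (1 - α)) := by
  set a : ℝ := ((N : ℝ) - 1) * h with ha
  set f : ℝ → ℝ := fun s => Real.exp ((1 - α) * s) * Real.exp (-Real.exp s * t) with hfdef
  have hα1' : 0 < 1 - α := by linarith
  have hxpos : 0 < t * Real.exp a := by positivity
  have hf0 : ∀ s, 0 ≤ f s := fun s => by positivity
  have hfc : Continuous f := by fun_prop
  -- antitonicity of f on Ici a
  have hmono : ∀ ⦃s s'⦄, a ≤ s → s ≤ s' → f s' ≤ f s := by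
    intro s s' has hss
    have e1 : Real.exp s * ((s' - s) + 1) ≤ Real.exp s' := by
      have h2 := Real.add_one_le_exp (s' - s)
      calc Real.exp s * ((s' - s) + 1) ≤ Real.exp s * Real.exp (s' - s) := by
            nlinarith [Real.exp_pos s]
        _ = Real.exp s' := by rw [← Real.exp_add]; ring_nf
    have e2 : Real.exp a ≤ Real.exp s := Real.exp_le_exp.mpr has
    have key : (1 - α) * s' + (-Real.exp s' * t) ≤ (1 - α) * s + (-Real.exp s * t) := by
      have h3 : (1 - α) * (s' - s) ≤ t * Real.exp s * (s' - s) :=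
        mul_le_mul_of_nonneg_right (by nlinarith) (by linarith)
      have h4 : t * Real.exp s * (s' - s) ≤ t * (Real.exp s' - Real.exp s) := by nlinarith
      linarith
    simp only [hfdef, ← Real.exp_add]
    exact Real.exp_le_exp.mpr key
  -- the change of variables map
  set φ : ℝ → ℝ := fun s => t * Real.exp s with hφdef
  have hφd : ∀ x ∈ Ioi a, HasDerivWithinAt φ (t * Real.exp x) (Ioi a) x := fun x _ =>
    ((Real.hasDerivAt_exp x).const_mul t).hasDerivWithinAt
  have hinj : InjOn φ (Ioi a) := by
    intro x _ y _ hxy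
    have : Real.exp x = Real.exp y := mul_left_cancel₀ ht.ne' hxy
    exact Real.exp_injective this
  have himg : φ '' Ioi a = Ioi (t * Real.exp a) := by
    ext σ
    constructor
    · rintro ⟨s, hs, rfl⟩
      exact mul_lt_mul_of_pos_left (Real.exp_lt_exp.mpr hs) ht
    · intro hσ
      have hσpos : 0 < σ := lt_trans hxpos hσ
      have hdiv : Real.exp a < σ / t := (lt_div_iff₀ ht).mpr (by
        have h5 := mem_Ioi.mp hσ
        linarith [mul_comm (Real.exp a) t])
      refine ⟨Real.log (σ / t), ?_, ?_⟩
      · have := Real.log_lt_log (Real.exp_pos a) hdiv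
        simpa using this
      · simp only [hφdef]
        rw [Real.exp_log (by positivity)]
        field_simp
  -- pointwise identity for the transformed integrand
  have hpt : ∀ s : ℝ, |t * Real.exp s| •
      (Real.exp (-(t * Real.exp s)) * (t * Real.exp s) ^ ((1 - α) - 1))
      = t ^ (1 - α) * f s := by
    intro s
    have h1 : (t * Real.exp s) ^ ((1 - α) - 1) = t ^ (-α) * Real.exp s ^ (-α) := by
      rw [show (1 - α) - 1 = -α by ring, Real.mul_rpow ht.le (Real.exp_pos s).le]
    rw [smul_eq_mul, abs_of_pos (by positivity), h1, ← Real.exp_mul]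
    rw [show t ^ (1 - α) = t ^ (1 : ℝ) * t ^ (-α) by
      rw [← Real.rpow_add ht]; ring_nf, Real.rpow_one]
    simp only [hfdef, ← Real.exp_add]
    ring_nf
    rw [show -(t * Real.exp s) - α * s + s = (-(t * Real.exp s)) + (-(α * s)) + s by ring,
      Real.exp_add, Real.exp_add]
    ring
  -- integrability of f on Ioi a
  have hg : IntegrableOn (fun σ => Real.exp (-σ) * σ ^ ((1 - α) - 1)) (Ioi (t * Real.exp a)) :=
    (Real.GammaIntegral_convergent hα1').mono_set (Ioi_subset_Ioi hxpos.le)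
  have hg' : IntegrableOn (fun σ => Real.exp (-σ) * σ ^ ((1 - α) - 1)) (φ '' Ioi a) := by
    rwa [himg]
  have hInt : IntegrableOn f (Ioi a) := by
    have h2 := (integrableOn_image_iff_integrableOn_abs_deriv_smul measurableSet_Ioi hφd hinj
      (fun σ => Real.exp (-σ) * σ ^ ((1 - α) - 1))).mp hg'
    have h3 : IntegrableOn (fun s => t ^ (1 - α) * f s) (Ioi a) := by
      apply h2.congr_fun _ measurableSet_Ioi
      intro s _
      exact hpt s
    have h4 := h3.const_mul (t ^ (α - 1))
    refine h4.congr ?_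
    filter_upwards with s
    rw [← mul_assoc, ← Real.rpow_add ht]
    norm_num
  -- the integral identity
  have hIoi : upperGamma (1 - α) (t * Real.exp a) = t ^ (1 - α) * ∫ s in Ioi a, f s := by
    unfold upperGamma
    rw [← himg, integral_image_eq_integral_abs_deriv_smul measurableSet_Ioi hφd hinj]
    rw [show (fun s => |t * Real.exp s| •
        (Real.exp (-(t * Real.exp s)) * (t * Real.exp s) ^ ((1 - α) - 1)))
        = fun s => t ^ (1 - α) * f s from funext hpt]
    exact MeasureTheory.integral_const_mul _ _
  -- comparing the sum to the integral
  set u : ℕ → ℝ := fun k => a + k * h with hudef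
  have hu : ∀ k : ℕ, u k ≤ u (k + 1) := by
    intro k; simp only [hudef]; push_cast; nlinarith
  have hii : ∀ m k : ℕ, IntervalIntegrable f volume (u m) (u k) := fun m k =>
    hfc.intervalIntegrable _ _
  have hterm : ∀ n : ℕ, h * f (u (n + 1)) ≤ ∫ x in (u n)..(u (n + 1)), f x := by
    intro n
    have hle : ∀ x ∈ Icc (u n) (u (n + 1)), f (u (n + 1)) ≤ f x := by
      intro x hx
      have h1 : a ≤ u n := by
        simp only [hudef]
        nlinarith [mul_nonneg ((Nat.cast_nonneg n : (0:ℝ) ≤ n)) hh.le]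
      exact hmono (le_trans h1 hx.1) hx.2
    have hconst : ∫ _x in (u n)..(u (n + 1)), f (u (n + 1)) = h * f (u (n + 1)) := by
      rw [intervalIntegral.integral_const, smul_eq_mul]
      congr 1
      simp only [hudef]
      push_cast
      ring
    rw [← hconst]
    exact intervalIntegral.integral_mono_on (μ := volume) (hu n)
      intervalIntegrable_const (hii n (n + 1)) hle
  have hsum : ∀ M : ℕ, ∑ n ∈ Finset.range M, h * f (u (n + 1)) ≤ ∫ s in Ioi a, f s := by
    intro M
    calc ∑ n ∈ Finset.range M, h * f (u (n + 1))
        ≤ ∑ n ∈ Finset.range M, ∫ x in (u n)..(u (n + 1)), f x :=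
          Finset.sum_le_sum fun n _ => hterm n
      _ = ∫ x in (u 0)..(u M), f x :=
          intervalIntegral.sum_integral_adjacent_intervals fun k _ => hii k (k + 1)
      _ = ∫ x in Ioc (u 0) (u M), f x := by
          rw [intervalIntegral.integral_of_le]
          induction M with
          | zero => exact le_refl _
          | succ m ih => exact le_trans ih (hu m)
      _ ≤ ∫ s in Ioi a, f s := by
          apply setIntegral_mono_set hInt (Filter.Eventually.of_forall hf0)
          apply HasSubset.Subset.eventuallyLE
          have : u 0 = a := by simp [hudef]
          rw [this]
          exact Ioc_subset_Ioi_self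
  -- reindex the tsum
  have htsum_eq : ∑' i : {i : ℤ // N ≤ i}, f (((i : ℤ) : ℝ) * h)
      = ∑' n : ℕ, f (u (n + 1)) := by
    rw [← (shiftEquivNat N).tsum_eq]
    congr 1
    funext n
    have harg : ((((shiftEquivNat N n : {i : ℤ // N ≤ i}) : ℤ)) : ℝ) * h = u (n + 1) := by
      show ((N + (n : ℤ) : ℤ) : ℝ) * h = a + ((n : ℕ) + 1 : ℕ) * h
      rw [ha]
      push_cast
      ring
    rw [harg]
  have htail : h * ∑' i : {i : ℤ // N ≤ i}, f (((i : ℤ) : ℝ) * h) ≤ ∫ s in Ioi a, f s := by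
    rw [htsum_eq, ← tsum_mul_left]
    exact Real.tsum_le_of_sum_range_le (fun n => by positivity) hsum
  -- assemble with the reflection formula
  have hsin : 0 < Real.sin (Real.pi * α) := by
    apply Real.sin_pos_of_pos_of_lt_pi
    · positivity
    · nlinarith [Real.pi_pos]
  have hΓα : 0 < Real.Gamma α := Real.Gamma_pos_of_pos hα0
  have hΓα' : 0 < Real.Gamma (1 - α) := Real.Gamma_pos_of_pos hα1'
  have hrefl : Real.Gamma α * Real.Gamma (1 - α) = Real.pi / Real.sin (Real.pi * α) :=
    Real.Gamma_mul_Gamma_one_sub α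
  have hRHS : (t ^ (α - 1) / Real.Gamma α) * (upperGamma (1 - α) (t * Real.exp a)
      / Real.Gamma (1 - α)) = (Real.sin (Real.pi * α) / Real.pi) * ∫ s in Ioi a, f s := by
    rw [hIoi]
    have htt : t ^ (α - 1) * t ^ (1 - α) = 1 := by
      rw [← Real.rpow_add ht]; norm_num
    have hππ : Real.sin (Real.pi * α) / Real.pi = 1 / (Real.Gamma α * Real.Gamma (1 - α)) := by
      rw [hrefl, one_div_div]
    calc (t ^ (α - 1) / Real.Gamma α) *
          (t ^ (1 - α) * (∫ s in Ioi a, f s) / Real.Gamma (1 - α))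
        = (t ^ (α - 1) * t ^ (1 - α)) * (∫ s in Ioi a, f s) /
            (Real.Gamma α * Real.Gamma (1 - α)) := by ring
      _ = (1 / (Real.Gamma α * Real.Gamma (1 - α))) * ∫ s in Ioi a, f s := by
          rw [htt]; ring
      _ = (Real.sin (Real.pi * α) / Real.pi) * ∫ s in Ioi a, f s := by rw [hππ]
  calc h * (Real.sin (Real.pi * α) / Real.pi) *
        ∑' i : {i : ℤ // N ≤ i}, f (((i : ℤ) : ℝ) * h)
      = (Real.sin (Real.pi * α) / Real.pi) *
        (h * ∑' i : {i : ℤ // N ≤ i}, f (((i : ℤ) : ℝ) * h)) := by ring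
    _ ≤ (Real.sin (Real.pi * α) / Real.pi) * ∫ s in Ioi a, f s := by
        apply mul_le_mul_of_nonneg_left htail
        positivity
    _ = _ := hRHS.symm
end

section
/- Let 0 < α < 1, ε > 0, 0 < δ ≤ T, let h > 0 be a step size such that |t^{α−1}/Γ(α) − T(t,h)| ≤ ε · t^{α−1}/Γ(α) for all t > 0, and let integers M < N satisfy: T e^{Mh} ≤ 1 − α, Γ(1−α, T e^{Mh}) ≥ (1−ε) Γ(1−α), δ e^{(N−1)h} ≥ 1 − α, and Γ(1−α, δ e^{(N−1)h}) ≤ ε Γ(1−α). Then for all t with δ ≤ t ≤ T, |t^{α−1}/Γ(α) − T_M^N(t,h)| ≤ 3ε · t^{α−1}/Γ(α), where T_M^N(t,h) = h (sin(πα)/π) Σ_{i=M}^{N−1} e^{(1−α)ih} e^{−e^{ih} t}. -/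
open MeasureTheory Real Set

section TruncatedKernelAux

open intervalIntegral

/-- The integrand of the sum-of-exponentials representation of the fractional kernel. -/
noncomputable def kernelIntegrand (α t x : ℝ) : ℝ := Real.exp ((1-α)*x - Real.exp x * t)

local notation "kf" => kernelIntegrand

lemma kernelIntegrand_cont {α t : ℝ} : Continuous (kf α t) := by
  unfold kernelIntegrand; fun_prop

lemma kernelIntegrand_eq {α t : ℝ} (x : ℝ) :
    Real.exp ((1-α)*x) * Real.exp (-Real.exp x * t) = kf α t x := by
  rw [kernelIntegrand, ← Real.exp_add]; ring_nf

/-- Change of variables `σ = t e^x` for the kernel integrand. -/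
lemma kernelIntegrand_integral {α t : ℝ} (ht : 0 < t) (a b : ℝ) :
    ∫ x in a..b, kf α t x
      = t ^ (α-1) * ∫ σ in (t * Real.exp a)..(t * Real.exp b),
          Real.exp (-σ) * σ ^ ((1-α) - 1 : ℝ) := by
  have key : ∫ x in a..b, ((fun σ => t ^ (α-1) * (Real.exp (-σ) * σ ^ ((1-α) - 1 : ℝ))) ∘
      (fun x => t * Real.exp x)) x * (t * Real.exp x)
      = ∫ σ in (t * Real.exp a)..(t * Real.exp b),
          t ^ (α-1) * (Real.exp (-σ) * σ ^ ((1-α) - 1 : ℝ)) := by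
    apply integral_comp_mul_deriv'
    · intro x _
      simpa using (Real.hasDerivAt_exp x).const_mul t
    · fun_prop
    · apply ContinuousOn.mono (s := {σ : ℝ | 0 < σ})
      · apply ContinuousOn.mul (by fun_prop)
        apply ContinuousOn.mul (by fun_prop)
        intro σ hσ
        exact (Real.continuousAt_rpow_const σ _ (Or.inl (ne_of_gt hσ))).continuousWithinAt
      · rintro y ⟨x, _, rfl⟩
        exact mul_pos ht (Real.exp_pos x)
  rw [← intervalIntegral.integral_const_mul, ← key]
  apply intervalIntegral.integral_congr
  intro x _
  simp only [Function.comp]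
  rw [Real.mul_rpow ht.le (Real.exp_pos x).le,
    Real.rpow_def_of_pos (Real.exp_pos x), Real.log_exp,
    Real.rpow_def_of_pos ht, Real.rpow_def_of_pos ht]
  nth_rewrite 5 [← Real.exp_log ht]
  simp only [kernelIntegrand, ← Real.exp_add]
  exact congrArg Real.exp (by ring)

lemma kernelIntegrand_hasDeriv (α t x : ℝ) :
    HasDerivAt (fun x => (1-α)*x - Real.exp x * t) ((1-α) - Real.exp x * t) x := by
  have h := ((hasDerivAt_id x).const_mul (1-α)).sub ((Real.hasDerivAt_exp x).mul_const t)
  simp only [mul_one] at h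
  exact h

lemma kernelIntegrand_mono {α t X0 : ℝ} (ht : 0 < t) (hX0 : t * Real.exp X0 ≤ 1 - α) :
    MonotoneOn (kf α t) (Iic X0) := by
  have : MonotoneOn (fun x => (1-α)*x - Real.exp x * t) (Iic X0) := by
    apply monotoneOn_of_deriv_nonneg (convex_Iic X0) (by fun_prop)
    · intro x hx
      exact ((kernelIntegrand_hasDeriv α t x).differentiableAt).differentiableWithinAt
    · intro x hx
      rw [(kernelIntegrand_hasDeriv α t x).deriv]
      rw [interior_Iic] at hx
      have : Real.exp x * t ≤ Real.exp X0 * t :=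
        mul_le_mul_of_nonneg_right (Real.exp_le_exp.mpr hx.le) ht.le
      nlinarith [mul_comm t (Real.exp X0)]
  exact Real.exp_monotone.comp_monotoneOn this

lemma kernelIntegrand_anti {α t X1 : ℝ} (ht : 0 < t) (hX1 : 1 - α ≤ t * Real.exp X1) :
    AntitoneOn (kf α t) (Ici X1) := by
  have : AntitoneOn (fun x => (1-α)*x - Real.exp x * t) (Ici X1) := by
    apply antitoneOn_of_deriv_nonpos (convex_Ici X1) (by fun_prop)
    · intro x hx
      exact ((kernelIntegrand_hasDeriv α t x).differentiableAt).differentiableWithinAt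
    · intro x hx
      rw [(kernelIntegrand_hasDeriv α t x).deriv]
      rw [interior_Ici] at hx
      have : Real.exp X1 * t ≤ Real.exp x * t :=
        mul_le_mul_of_nonneg_right (Real.exp_le_exp.mpr hx.le) ht.le
      nlinarith [mul_comm t (Real.exp X1)]
  exact Real.exp_monotone.comp_antitoneOn this

lemma kernelIntegrand_step_mono {α t a b X0 : ℝ} (ht : 0 < t)
    (hX0 : t * Real.exp X0 ≤ 1 - α) (hab : a ≤ b) (hb : b ≤ X0) :
    (b - a) * kf α t a ≤ ∫ x in a..b, kf α t x := by
  have h1 : ∫ x in a..b, kf α t a = (b - a) * kf α t a := by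
    simp [intervalIntegral.integral_const, smul_eq_mul]
  rw [← h1]
  apply intervalIntegral.integral_mono_on hab
  · exact intervalIntegrable_const
  · exact kernelIntegrand_cont.intervalIntegrable a b
  · intro x hx
    exact kernelIntegrand_mono ht hX0 (le_trans (le_trans hx.1 hx.2) hb : a ∈ Iic X0)
      (le_trans hx.2 hb : x ∈ Iic X0) hx.1

lemma kernelIntegrand_step_anti {α t a b X1 : ℝ} (ht : 0 < t)
    (hX1 : 1 - α ≤ t * Real.exp X1) (hab : a ≤ b) (ha : X1 ≤ a) :
    (b - a) * kf α t b ≤ ∫ x in a..b, kf α t x := by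
  have h1 : ∫ x in a..b, kf α t b = (b - a) * kf α t b := by
    simp [intervalIntegral.integral_const, smul_eq_mul]
  rw [← h1]
  apply intervalIntegral.integral_mono_on hab
  · exact intervalIntegrable_const
  · exact kernelIntegrand_cont.intervalIntegrable a b
  · intro x hx
    exact kernelIntegrand_anti ht hX1 (le_trans ha hx.1 : x ∈ Ici X1)
      (le_trans ha (le_trans hx.1 hx.2) : b ∈ Ici X1) hx.2

lemma gammaIntegrand_int {α : ℝ} (hα1 : α < 1) :
    IntegrableOn (fun σ => Real.exp (-σ) * σ ^ ((1-α) - 1 : ℝ)) (Ioi 0) :=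
  Real.GammaIntegral_convergent (by linarith)

lemma gammaIntegrand_nonneg {α σ : ℝ} (hσ : 0 ≤ σ) :
    0 ≤ Real.exp (-σ) * σ ^ ((1-α) - 1 : ℝ) :=
  mul_nonneg (Real.exp_pos _).le (Real.rpow_nonneg hσ _)

lemma upperGamma_nonneg {α : ℝ} {x : ℝ} (hx : 0 ≤ x) : 0 ≤ upperGamma (1-α) x := by
  apply setIntegral_nonneg measurableSet_Ioi
  intro σ hσ
  exact gammaIntegrand_nonneg (le_trans hx (le_of_lt hσ))

lemma upperGamma_mono {α : ℝ} (hα1 : α < 1) {x y : ℝ} (hx : 0 < x) (hxy : x ≤ y) :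
    upperGamma (1-α) y ≤ upperGamma (1-α) x := by
  apply setIntegral_mono_set ((gammaIntegrand_int hα1).mono_set (Ioi_subset_Ioi hx.le))
  · filter_upwards [ae_restrict_mem measurableSet_Ioi] with σ hσ
    exact gammaIntegrand_nonneg (le_trans hx.le hσ.le)
  · exact HasSubset.Subset.eventuallyLE (Ioi_subset_Ioi hxy)

lemma upperGamma_split {α : ℝ} (hα1 : α < 1) {b : ℝ} (hb : 0 < b) :
    (∫ σ in Ioc 0 b, Real.exp (-σ) * σ ^ ((1-α) - 1 : ℝ))
      = Real.Gamma (1-α) - upperGamma (1-α) b := by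
  have hu : Ioc 0 b ∪ Ioi b = Ioi 0 := Ioc_union_Ioi_eq_Ioi hb.le
  have := setIntegral_union (f := fun σ => Real.exp (-σ) * σ ^ ((1-α) - 1 : ℝ))
    (μ := volume) (Ioc_disjoint_Ioi le_rfl) measurableSet_Ioi
    ((gammaIntegrand_int hα1).mono_set (by rw [← hu]; exact subset_union_left))
    ((gammaIntegrand_int hα1).mono_set (by rw [← hu]; exact subset_union_right))
  rw [hu] at this
  rw [Real.Gamma_eq_integral (by linarith : (0:ℝ) < 1-α)]
  unfold upperGamma
  linarith [this]

lemma upperGamma_le_gamma {α : ℝ} (hα1 : α < 1) {b : ℝ} (hb : 0 < b) :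
    upperGamma (1-α) b ≤ Real.Gamma (1-α) := by
  have h1 := upperGamma_split hα1 hb
  have h2 : 0 ≤ ∫ σ in Ioc 0 b, Real.exp (-σ) * σ ^ ((1-α) - 1 : ℝ) :=
    setIntegral_nonneg measurableSet_Ioc (fun σ hσ => gammaIntegrand_nonneg hσ.1.le)
  linarith

lemma lower_int_bound {α : ℝ} (hα1 : α < 1) {a b : ℝ} (ha : 0 < a) (hab : a ≤ b) :
    (∫ σ in a..b, Real.exp (-σ) * σ ^ ((1-α) - 1 : ℝ))
      ≤ Real.Gamma (1-α) - upperGamma (1-α) b := by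
  rw [intervalIntegral.integral_of_le hab, ← upperGamma_split hα1 (lt_of_lt_of_le ha hab)]
  apply setIntegral_mono_set ((gammaIntegrand_int hα1).mono_set Ioc_subset_Ioi_self)
  · filter_upwards [ae_restrict_mem measurableSet_Ioc] with σ hσ
    exact gammaIntegrand_nonneg hσ.1.le
  · exact HasSubset.Subset.eventuallyLE (Ioc_subset_Ioc_left ha.le)

lemma upper_int_bound {α : ℝ} (hα1 : α < 1) {a b : ℝ} (ha : 0 < a) (hab : a ≤ b) :
    (∫ σ in a..b, Real.exp (-σ) * σ ^ ((1-α) - 1 : ℝ)) ≤ upperGamma (1-α) a := by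
  rw [intervalIntegral.integral_of_le hab]
  apply setIntegral_mono_set ((gammaIntegrand_int hα1).mono_set (Ioi_subset_Ioi ha.le))
  · filter_upwards [ae_restrict_mem measurableSet_Ioi] with σ hσ
    exact gammaIntegrand_nonneg (le_trans ha.le hσ.le)
  · exact HasSubset.Subset.eventuallyLE Ioc_subset_Ioi_self

lemma tail_lower_sum {α t h c : ℝ} (ht : 0 < t) (hh : 0 < h)
    (hX0 : t * Real.exp (c*h) ≤ 1-α) (n : ℕ) :
    ∑ k ∈ Finset.range n, h * kf α t ((c - n + k)*h)
      ≤ ∫ x in ((c-n)*h)..(c*h), kf α t x := by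
  induction n with
  | zero => simp
  | succ n ih =>
    rw [Finset.sum_range_succ']
    have e1 : ∀ k : ℕ, (c - (n+1:ℕ) + ((k:ℕ)+1:ℕ))*h = (c - n + k)*h := by
      intro k; push_cast; ring
    have e2 : (c - (n+1:ℕ) + (0:ℕ))*h = (c - (n+1))*h := by push_cast; ring
    simp only [e1, e2]
    have key : h * kf α t ((c - (n+1))*h) ≤ ∫ x in ((c-(n+1))*h)..((c-n)*h), kf α t x := by
      have := kernelIntegrand_step_mono (α := α) ht hX0
        (a := (c-(n+1))*h) (b := (c-n)*h) (by nlinarith) (by nlinarith)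
      calc h * kf α t ((c - (n+1))*h)
          = ((c-n)*h - (c-(n+1))*h) * kf α t ((c-(n+1))*h) := by ring_nf
        _ ≤ _ := this
    have adj : (∫ x in ((c-(n+1))*h)..((c-n)*h), kf α t x)
        + ∫ x in ((c-n)*h)..(c*h), kf α t x
        = ∫ x in ((c-(n+1))*h)..(c*h), kf α t x :=
      integral_add_adjacent_intervals (kernelIntegrand_cont.intervalIntegrable _ _)
        (kernelIntegrand_cont.intervalIntegrable _ _)
    push_cast
    push_cast at ih key adj
    linarith

lemma tail_upper_sum {α t h d : ℝ} (ht : 0 < t) (hh : 0 < h)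
    (hX1 : 1-α ≤ t * Real.exp (d*h)) (n : ℕ) :
    ∑ k ∈ Finset.range n, h * kf α t ((d + 1 + k)*h)
      ≤ ∫ x in (d*h)..((d+n)*h), kf α t x := by
  induction n with
  | zero => simp
  | succ n ih =>
    rw [Finset.sum_range_succ]
    have key : h * kf α t ((d + 1 + n)*h) ≤ ∫ x in ((d+n)*h)..((d+(n+1))*h), kf α t x := by
      have := kernelIntegrand_step_anti (α := α) ht hX1
        (a := (d+n)*h) (b := (d+(n+1))*h) (by nlinarith) (by nlinarith)
      calc h * kf α t ((d + 1 + n)*h)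
          = ((d+(n+1))*h - (d+n)*h) * kf α t ((d+(n+1))*h) := by ring_nf
        _ ≤ _ := this
    have adj : (∫ x in (d*h)..((d+n)*h), kf α t x)
        + ∫ x in ((d+n)*h)..((d+(n+1))*h), kf α t x
        = ∫ x in (d*h)..((d+(n+1))*h), kf α t x :=
      integral_add_adjacent_intervals (kernelIntegrand_cont.intervalIntegrable _ _)
        (kernelIntegrand_cont.intervalIntegrable _ _)
    push_cast
    push_cast at ih key adj
    linarith

lemma tail_lower_finset {α t h : ℝ} {M : ℤ} (hα1 : α < 1) (ht : 0 < t) (hh : 0 < h)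
    (hX0 : t * Real.exp ((M:ℝ)*h) ≤ 1-α) (s : Finset ℤ) (hs : ∀ i ∈ s, i < M) :
    ∑ i ∈ s, h * kf α t ((i:ℝ)*h)
      ≤ t^(α-1) * (Real.Gamma (1-α) - upperGamma (1-α) (t * Real.exp ((M:ℝ)*h))) := by
  have hRHS : 0 ≤ t^(α-1) * (Real.Gamma (1-α) - upperGamma (1-α) (t * Real.exp ((M:ℝ)*h))) := by
    have := upperGamma_le_gamma hα1 (mul_pos ht (Real.exp_pos ((M:ℝ)*h)))
    have h2 : (0:ℝ) ≤ Real.Gamma (1-α) - upperGamma (1-α) (t * Real.exp ((M:ℝ)*h)) := by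
      linarith
    positivity
  rcases s.eq_empty_or_nonempty with rfl | hne
  · simpa using hRHS
  set m := s.min' hne with hm
  have hmM : m < M := hs _ (s.min'_mem hne)
  set n : ℕ := (M - m).toNat with hndef
  have hn : (n:ℤ) = M - m := Int.toNat_of_nonneg (by omega)
  have hnR : (n:ℝ) = (M:ℝ) - (m:ℝ) := by exact_mod_cast hn
  have hsub : s ⊆ Finset.image (fun k : ℕ => m + (k:ℤ)) (Finset.range n) := by
    intro i hi
    have h1 : m ≤ i := s.min'_le i hi
    have h2 : i < M := hs i hi
    simp only [Finset.mem_image, Finset.mem_range]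
    exact ⟨(i - m).toNat, by omega, by omega⟩
  calc ∑ i ∈ s, h * kf α t ((i:ℝ)*h)
      ≤ ∑ i ∈ Finset.image (fun k : ℕ => m + (k:ℤ)) (Finset.range n),
          h * kf α t ((i:ℝ)*h) := by
        apply Finset.sum_le_sum_of_subset_of_nonneg hsub
        intro i _ _
        exact mul_nonneg hh.le (Real.exp_pos _).le
    _ = ∑ k ∈ Finset.range n, h * kf α t ((((M:ℝ) - n) + k)*h) := by
        rw [Finset.sum_image (by intro a _ b _ e; simp only at e; omega)]
        apply Finset.sum_congr rfl
        intro k _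
        congr 2
        push_cast
        rw [hnR]; ring
    _ ≤ ∫ x in (((M:ℝ)-n)*h)..((M:ℝ)*h), kf α t x := tail_lower_sum ht hh hX0 n
    _ = t^(α-1) * ∫ σ in (t * Real.exp (((M:ℝ)-n)*h))..(t * Real.exp ((M:ℝ)*h)),
          Real.exp (-σ) * σ ^ ((1-α) - 1 : ℝ) := kernelIntegrand_integral ht _ _
    _ ≤ _ := by
        apply mul_le_mul_of_nonneg_left _ (Real.rpow_nonneg ht.le _)
        apply lower_int_bound hα1 (mul_pos ht (Real.exp_pos _))
        apply mul_le_mul_of_nonneg_left _ ht.le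
        apply Real.exp_le_exp.mpr
        nlinarith [Nat.cast_nonneg (α := ℝ) n]

lemma tail_upper_finset {α t h : ℝ} {N : ℤ} (hα1 : α < 1) (ht : 0 < t) (hh : 0 < h)
    (hX1 : 1-α ≤ t * Real.exp (((N:ℝ)-1)*h)) (s : Finset ℤ) (hs : ∀ i ∈ s, N ≤ i) :
    ∑ i ∈ s, h * kf α t ((i:ℝ)*h)
      ≤ t^(α-1) * upperGamma (1-α) (t * Real.exp (((N:ℝ)-1)*h)) := by
  have hb0 : (0:ℝ) < t * Real.exp (((N:ℝ)-1)*h) := mul_pos ht (Real.exp_pos _)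
  have hRHS : 0 ≤ t^(α-1) * upperGamma (1-α) (t * Real.exp (((N:ℝ)-1)*h)) := by
    have h2 : 0 ≤ upperGamma (1-α) (t * Real.exp (((N:ℝ)-1)*h)) := upperGamma_nonneg hb0.le
    positivity
  rcases s.eq_empty_or_nonempty with rfl | hne
  · simpa using hRHS
  set n' := s.max' hne with hn'
  have hNn' : N ≤ n' := hs _ (s.max'_mem hne)
  set n : ℕ := (n' - N + 1).toNat with hndef
  have hn : (n:ℤ) = n' - N + 1 := Int.toNat_of_nonneg (by omega)
  have hsub : s ⊆ Finset.image (fun k : ℕ => N + (k:ℤ)) (Finset.range n) := by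
    intro i hi
    have h1 : N ≤ i := hs i hi
    have h2 : i ≤ n' := s.le_max' i hi
    simp only [Finset.mem_image, Finset.mem_range]
    exact ⟨(i - N).toNat, by omega, by omega⟩
  calc ∑ i ∈ s, h * kf α t ((i:ℝ)*h)
      ≤ ∑ i ∈ Finset.image (fun k : ℕ => N + (k:ℤ)) (Finset.range n),
          h * kf α t ((i:ℝ)*h) := by
        apply Finset.sum_le_sum_of_subset_of_nonneg hsub
        intro i _ _
        exact mul_nonneg hh.le (Real.exp_pos _).le
    _ = ∑ k ∈ Finset.range n, h * kf α t (((((N:ℝ)-1) + 1) + k)*h) := by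
        rw [Finset.sum_image (by intro a _ b _ e; simp only at e; omega)]
        apply Finset.sum_congr rfl
        intro k _
        congr 2
        push_cast
        ring
    _ ≤ ∫ x in (((N:ℝ)-1)*h)..((((N:ℝ)-1)+n)*h), kf α t x := tail_upper_sum ht hh hX1 n
    _ = t^(α-1) * ∫ σ in (t * Real.exp (((N:ℝ)-1)*h))..(t * Real.exp ((((N:ℝ)-1)+n)*h)),
          Real.exp (-σ) * σ ^ ((1-α) - 1 : ℝ) := kernelIntegrand_integral ht _ _
    _ ≤ _ := by
        apply mul_le_mul_of_nonneg_left _ (Real.rpow_nonneg ht.le _)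
        apply upper_int_bound hα1 hb0
        apply mul_le_mul_of_nonneg_left _ ht.le
        apply Real.exp_le_exp.mpr
        nlinarith [Nat.cast_nonneg (α := ℝ) n]

end TruncatedKernelAux

/-- **Total error of the truncated sum-of-exponentials approximation.** Under the step-size
condition on `h` and the truncation conditions on `M` and `N`, the truncated trapezoidal
approximation `T_M^N(t,h)` of the fractional kernel satisfies a `3ε` relative error bound
on `δ ≤ t ≤ T`. -/
theorem truncated_kernel_approximation_error
    (α ε δ T h : ℝ) (M N : ℤ)
    (hα0 : 0 < α) (hα1 : α < 1) (hε : 0 < ε) (hδ : 0 < δ) (hδT : δ ≤ T) (hh : 0 < h)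
    (hMN : M < N)
    (htrap : ∀ t > (0:ℝ),
      |t ^ (α - 1) / Real.Gamma α -
          h * (Real.sin (Real.pi * α) / Real.pi) *
            ∑' i : ℤ, Real.exp ((1 - α) * ((i : ℝ) * h)) * Real.exp (-Real.exp ((i : ℝ) * h) * t)|
        ≤ ε * (t ^ (α - 1) / Real.Gamma α))
    (hM1 : T * Real.exp ((M : ℝ) * h) ≤ 1 - α)
    (hM2 : (1 - ε) * Real.Gamma (1 - α) ≤ upperGamma (1 - α) (T * Real.exp ((M : ℝ) * h)))
    (hN1 : 1 - α ≤ δ * Real.exp (((N : ℝ) - 1) * h))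
    (hN2 : upperGamma (1 - α) (δ * Real.exp (((N : ℝ) - 1) * h)) ≤ ε * Real.Gamma (1 - α)) :
    ∀ t, δ ≤ t → t ≤ T →
      |t ^ (α - 1) / Real.Gamma α -
          h * (Real.sin (Real.pi * α) / Real.pi) *
            ∑ i ∈ Finset.Icc M (N - 1),
              Real.exp ((1 - α) * ((i : ℝ) * h)) * Real.exp (-Real.exp ((i : ℝ) * h) * t)|
        ≤ 3 * ε * (t ^ (α - 1) / Real.Gamma α) := by
  intro t hδt htT
  have ht : 0 < t := lt_of_lt_of_le hδ hδt
  set f : ℤ → ℝ := fun i =>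
    Real.exp ((1 - α) * ((i : ℝ) * h)) * Real.exp (-Real.exp ((i : ℝ) * h) * t) with hf
  have hfk : ∀ i : ℤ, f i = kernelIntegrand α t ((i:ℝ)*h) := fun i => kernelIntegrand_eq _
  have hf0 : ∀ i : ℤ, 0 ≤ f i := fun i => mul_nonneg (Real.exp_pos _).le (Real.exp_pos _).le
  set Γ1 := Real.Gamma (1-α) with hΓ1def
  have hΓ1 : 0 < Γ1 := Real.Gamma_pos_of_pos (by linarith)
  set P := t ^ (α-1) with hPdef
  have hP : 0 < P := Real.rpow_pos_of_pos ht _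
  have hX0 : t * Real.exp ((M:ℝ)*h) ≤ 1-α :=
    le_trans (mul_le_mul_of_nonneg_right htT (Real.exp_pos _).le) hM1
  have hX1 : 1-α ≤ t * Real.exp (((N:ℝ)-1)*h) :=
    le_trans hN1 (mul_le_mul_of_nonneg_right hδt (Real.exp_pos _).le)
  -- incomplete gamma bounds at t
  have hL : Γ1 - upperGamma (1-α) (t * Real.exp ((M:ℝ)*h)) ≤ ε * Γ1 := by
    have h1 := upperGamma_mono (y := T * Real.exp ((M:ℝ)*h)) hα1
      (mul_pos ht (Real.exp_pos ((M:ℝ)*h)))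
      (mul_le_mul_of_nonneg_right htT (Real.exp_pos ((M:ℝ)*h)).le)
    linarith [hM2]
  have hU : upperGamma (1-α) (t * Real.exp (((N:ℝ)-1)*h)) ≤ ε * Γ1 := by
    have h1 := upperGamma_mono (y := t * Real.exp (((N:ℝ)-1)*h)) hα1
      (mul_pos hδ (Real.exp_pos (((N:ℝ)-1)*h)))
      (mul_le_mul_of_nonneg_right hδt (Real.exp_pos (((N:ℝ)-1)*h)).le)
    linarith [hN2]
  -- tail bounds
  have hTL : ∀ s : Finset ℤ, (∀ i ∈ s, i < M) → ∑ i ∈ s, h * f i ≤ ε * (P * Γ1) := by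
    intro s hs
    simp only [hfk]
    calc ∑ i ∈ s, h * kernelIntegrand α t ((i:ℝ)*h)
        ≤ P * (Γ1 - upperGamma (1-α) (t * Real.exp ((M:ℝ)*h))) :=
          tail_lower_finset hα1 ht hh hX0 s hs
      _ ≤ P * (ε * Γ1) := mul_le_mul_of_nonneg_left hL hP.le
      _ = ε * (P * Γ1) := by ring
  have hTU : ∀ s : Finset ℤ, (∀ i ∈ s, N ≤ i) → ∑ i ∈ s, h * f i ≤ ε * (P * Γ1) := by
    intro s hs
    simp only [hfk]
    calc ∑ i ∈ s, h * kernelIntegrand α t ((i:ℝ)*h)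
        ≤ P * upperGamma (1-α) (t * Real.exp (((N:ℝ)-1)*h)) :=
          tail_upper_finset hα1 ht hh hX1 s hs
      _ ≤ P * (ε * Γ1) := mul_le_mul_of_nonneg_left hU hP.le
      _ = ε * (P * Γ1) := by ring
  -- bound on finsets avoiding the middle block
  have hcompl : ∀ u : Finset ℤ, (∀ i ∈ u, i ∉ Finset.Icc M (N-1)) →
      ∑ i ∈ u, h * f i ≤ 2 * (ε * (P * Γ1)) := by
    intro u hu
    rw [← Finset.sum_filter_add_sum_filter_not u (fun i => i < M)]
    have b1 := hTL (u.filter (fun i => i < M)) (by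
      intro i hi; exact (Finset.mem_filter.mp hi).2)
    have b2 := hTU (u.filter (fun i => ¬ i < M)) (by
      intro i hi
      have h1 := Finset.mem_filter.mp hi
      have h2 := hu i h1.1
      simp only [Finset.mem_Icc] at h2
      omega)
    linarith
  -- summability
  have hsum : Summable f := by
    apply summable_of_sum_le
      (c := 2 * (ε * (P * Γ1)) / h + ∑ i ∈ Finset.Icc M (N-1), f i) hf0
    intro u
    rw [← Finset.sum_filter_add_sum_filter_not u (fun i => i ∈ Finset.Icc M (N-1))]
    have b1 : ∑ i ∈ u.filter (fun i => i ∈ Finset.Icc M (N-1)), f i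
        ≤ ∑ i ∈ Finset.Icc M (N-1), f i := by
      apply Finset.sum_le_sum_of_subset_of_nonneg
        (fun i hi => (Finset.mem_filter.mp hi).2) (fun i _ _ => hf0 i)
    have b2 : ∑ i ∈ u.filter (fun i => ¬ i ∈ Finset.Icc M (N-1)), f i
        ≤ 2 * (ε * (P * Γ1)) / h := by
      rw [le_div_iff₀ hh]
      calc (∑ i ∈ u.filter (fun i => ¬ i ∈ Finset.Icc M (N-1)), f i) * h
          = ∑ i ∈ u.filter (fun i => ¬ i ∈ Finset.Icc M (N-1)), h * f i := by
            rw [Finset.sum_mul]; exact Finset.sum_congr rfl fun i _ => mul_comm _ _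
        _ ≤ _ := hcompl _ (fun i hi => (Finset.mem_filter.mp hi).2)
    linarith
  -- splitting the tsum
  set Tc := ∑' (x : ↥((↑(Finset.Icc M (N-1)) : Set ℤ)ᶜ)), f ↑x with hTcdef
  have key : (∑ i ∈ Finset.Icc M (N-1), f i) + Tc = ∑' i : ℤ, f i := by
    rw [← Finset.tsum_subtype]
    exact Summable.tsum_add_tsum_compl (hsum.subtype _) (hsum.subtype _)
  have hTc0 : 0 ≤ Tc := tsum_nonneg (fun x => hf0 _)
  have hTcle : h * Tc ≤ 2 * (ε * (P * Γ1)) := by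
    have hsub : Summable (fun x : ↥((↑(Finset.Icc M (N-1)) : Set ℤ)ᶜ) => f ↑x) :=
      hsum.subtype _
    rw [hTcdef, ← tsum_mul_left]
    apply Summable.tsum_le_of_sum_le (hsub.mul_left h)
    intro u
    calc ∑ x ∈ u, h * f ↑x
        = ∑ i ∈ u.map (Function.Embedding.subtype _), h * f i := by
          rw [Finset.sum_map]; rfl
      _ ≤ _ := by
          apply hcompl
          intro i hi
          rw [Finset.mem_map] at hi
          obtain ⟨x, _, rfl⟩ := hi
          simpa using x.2
  -- reflection formula
  have hΓα : 0 < Real.Gamma α := Real.Gamma_pos_of_pos hα0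
  have hsin : 0 < Real.sin (Real.pi * α) := by
    apply Real.sin_pos_of_pos_of_lt_pi (by positivity)
    nlinarith [Real.pi_pos]
  have hrefl : Real.Gamma α * Γ1 = Real.pi / Real.sin (Real.pi * α) :=
    Real.Gamma_mul_Gamma_one_sub α
  rw [eq_div_iff (ne_of_gt hsin)] at hrefl
  have hcΓ : Real.sin (Real.pi * α) / Real.pi * Γ1 = 1 / Real.Gamma α := by
    rw [eq_div_iff (ne_of_gt hΓα), div_mul_eq_mul_div, div_mul_eq_mul_div, div_eq_iff
      (ne_of_gt Real.pi_pos)]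
    linarith [hrefl]
  -- final assembly
  have htr := htrap t ht
  set S := ∑' i : ℤ, f i with hSdef
  set F := ∑ i ∈ Finset.Icc M (N-1), f i with hFdef
  have hSF : S - F = Tc := by rw [← key]; ring
  set c := Real.sin (Real.pi * α) / Real.pi with hcdef
  have hc : 0 < c := div_pos hsin Real.pi_pos
  set K := t ^ (α-1) / Real.Gamma α with hKdef
  have hKP : K = P * (1 / Real.Gamma α) := by rw [hKdef, hPdef]; ring
  have hmid : |K - h * c * S| ≤ ε * K := htr
  have htail : h * c * (S - F) ≤ 2 * ε * K := by
    rw [hSF]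
    calc h * c * Tc = c * (h * Tc) := by ring
      _ ≤ c * (2 * (ε * (P * Γ1))) := mul_le_mul_of_nonneg_left hTcle hc.le
      _ = 2 * ε * (P * (c * Γ1)) := by ring
      _ = 2 * ε * K := by rw [hcdef, hcΓ, ← hKP]
  have habs : |K - h * c * F| ≤ |K - h * c * S| + h * c * (S - F) := by
    have h1 : K - h * c * F = (K - h * c * S) + h * c * (S - F) := by ring
    rw [h1]
    refine (abs_add_le _ _).trans ?_
    have : |h * c * (S - F)| = h * c * (S - F) := by
      apply abs_of_nonneg
      rw [hSF]; positivity
    rw [this]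
  calc |K - h * c * F| ≤ |K - h * c * S| + h * c * (S - F) := habs
    _ ≤ ε * K + 2 * ε * K := add_le_add hmid htail
    _ = 3 * ε * K := by ring
end

section
/- Let α > 0 be a non-integer real number, m = ⌈α⌉, and let f : [0,T] → ℝ be m times continuously differentiable. Define the Caputo fractional derivative D_*^α f(s) = (1/Γ(m−α)) ∫_0^s (s−σ)^{m−α−1} f^{(m)}(σ) dσ. Then for every t ∈ [0,T], (1/Γ(α)) ∫_0^t (t−s)^{α−1} D_*^α f(s) ds = f(t) − Σ_{k=0}^{m−1} (t^k/k!) f^{(k)}(0). -/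
open MeasureTheory Real Set intervalIntegral

set_option maxHeartbeats 1000000

lemma real_beta_scaled {u v a : ℝ} (hu : 0 < u) (hv : 0 < v) (ha : 0 < a) :
    ∫ x in (0:ℝ)..a, x ^ (u - 1) * (a - x) ^ (v - 1)
      = a ^ (u + v - 1) * (Real.Gamma u * Real.Gamma v / Real.Gamma (u + v)) := by
  have hΓ : Real.Gamma (u + v) ≠ 0 := (Real.Gamma_pos_of_pos (by linarith)).ne'
  have hΓ' : ((Real.Gamma (u + v) : ℝ) : ℂ) ≠ 0 := by exact_mod_cast hΓ
  have hb := Complex.betaIntegral_scaled (u : ℂ) (v : ℂ) ha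
  have hgg := Complex.Gamma_mul_Gamma_eq_betaIntegral
      (s := (u:ℂ)) (t := (v:ℂ)) (by simpa using hu) (by simpa using hv)
  rw [show ((u:ℂ) + v) = ((u + v : ℝ) : ℂ) by push_cast; ring, Complex.Gamma_ofReal,
    Complex.Gamma_ofReal, Complex.Gamma_ofReal] at hgg
  have hbeta : Complex.betaIntegral u v
      = ((Real.Gamma u * Real.Gamma v / Real.Gamma (u + v) : ℝ) : ℂ) := by
    push_cast
    rw [eq_div_iff hΓ']
    linear_combination -hgg
  have hL : (∫ x in (0:ℝ)..a, (x : ℂ) ^ ((u:ℂ) - 1) * ((a : ℂ) - x) ^ ((v:ℂ) - 1))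
      = ((∫ x in (0:ℝ)..a, x ^ (u - 1) * (a - x) ^ (v - 1) : ℝ) : ℂ) := by
    rw [← intervalIntegral.integral_ofReal]
    refine intervalIntegral.integral_congr fun x hx => ?_
    rw [uIcc_of_le ha.le] at hx
    rw [Complex.ofReal_mul, Complex.ofReal_cpow hx.1,
      Complex.ofReal_cpow (by linarith [hx.2] : (0:ℝ) ≤ a - x)]
    push_cast
    ring
  have hR : ((a : ℂ) ^ ((u:ℂ) + v - 1)) = ((a ^ (u + v - 1) : ℝ) : ℂ) := by
    rw [Complex.ofReal_cpow ha.le]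
    push_cast
    ring_nf
  rw [hL, hR, hbeta, ← Complex.ofReal_mul] at hb
  exact_mod_cast hb

lemma taylor_integral_remainder' {f : ℝ → ℝ} {T t : ℝ} (n : ℕ) (hT : 0 < T)
    (ht : t ∈ Set.Icc (0:ℝ) T) (hf : ContDiffOn ℝ (n+1) f (Set.Icc 0 T)) :
    f t - ∑ k ∈ Finset.range (n+1),
        t ^ k / (Nat.factorial k : ℝ) * iteratedDerivWithin k f (Set.Icc 0 T) 0
      = ∫ σ in (0:ℝ)..t,
          ((Nat.factorial n : ℝ))⁻¹ * (t - σ) ^ n * iteratedDerivWithin (n+1) f (Set.Icc 0 T) σ := by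
  have hsum : ∑ k ∈ Finset.range (n+1),
      t ^ k / (Nat.factorial k : ℝ) * iteratedDerivWithin k f (Set.Icc 0 T) 0
      = taylorWithinEval f n (Set.Icc 0 T) 0 t := by
    rw [taylor_within_apply]
    refine Finset.sum_congr rfl fun k _ => ?_
    rw [smul_eq_mul, sub_zero]
    ring
  rw [hsum]
  rcases eq_or_lt_of_le ht.1 with h0 | h0
  · simp [← h0, taylorWithinEval_self]
  -- t > 0
  have hcont : ContinuousOn (fun y => taylorWithinEval f n (Set.Icc 0 T) y t) (Set.Icc 0 t) :=
    (continuousOn_taylorWithinEval (uniqueDiffOn_Icc hT) hf.of_succ).mono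
      (Set.Icc_subset_Icc le_rfl ht.2)
  have hg : ContinuousOn (iteratedDerivWithin (n+1) f (Set.Icc 0 T)) (Set.Icc 0 T) :=
    hf.continuousOn_iteratedDerivWithin le_rfl (uniqueDiffOn_Icc hT)
  have hderiv : ∀ y ∈ Set.Ioo (0:ℝ) t,
      HasDerivAt (fun y => taylorWithinEval f n (Set.Icc 0 T) y t)
        ((((Nat.factorial n : ℝ))⁻¹ * (t - y) ^ n) • iteratedDerivWithin (n+1) f (Set.Icc 0 T) y) y := by
    intro y hy
    refine taylorWithinEval_hasDerivAt_Ioo t hT ⟨hy.1, lt_of_lt_of_le hy.2 ht.2⟩ hf.of_succ ?_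
    exact (hf.differentiableOn_iteratedDerivWithin (by exact_mod_cast Nat.lt_succ_self n)
      (uniqueDiffOn_Icc hT)).mono Set.Ioo_subset_Icc_self
  have hint : IntervalIntegrable
      (fun y => (((Nat.factorial n : ℝ))⁻¹ * (t - y) ^ n) • iteratedDerivWithin (n+1) f (Set.Icc 0 T) y)
      volume 0 t := by
    apply ContinuousOn.intervalIntegrable
    have : Set.uIcc (0:ℝ) t ⊆ Set.Icc 0 T := by
      rw [Set.uIcc_of_le ht.1]; exact Set.Icc_subset_Icc le_rfl ht.2
    exact ((continuousOn_const.mul ((continuousOn_const.sub continuousOn_id).pow n)).smul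
      (hg.mono this)).mono (by simpa using subset_rfl)
  have := intervalIntegral.integral_eq_sub_of_hasDeriv_right_of_le ht.1 hcont
    (fun y hy => (hderiv y hy).hasDerivWithinAt) hint
  rw [taylorWithinEval_self] at this
  rw [← this]
  refine intervalIntegral.integral_congr fun y _ => ?_
  rw [smul_eq_mul]

/-- **Fractional integral of the Caputo derivative.** For non-integer `α > 0`,
`m = ⌈α⌉`, and an `m` times continuously differentiable `f` on `[0,T]`, applying the
Riemann–Liouville fractional integral `J^α` to the Caputo derivative `D_*^α f` recovers
`f` minus its Taylor polynomial of degree `m-1` at `0`. -/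
theorem fracint_caputo_deriv
    (α T : ℝ) (m : ℕ) (hα : 0 < α) (hni : ∀ n : ℤ, α ≠ (n : ℝ)) (hm : m = ⌈α⌉₊)
    (hT : 0 < T) (f : ℝ → ℝ) (hf : ContDiffOn ℝ m f (Set.Icc 0 T)) :
    ∀ t ∈ Set.Icc (0:ℝ) T,
      (1 / Real.Gamma α) *
        ∫ s in (0:ℝ)..t, (t - s) ^ (α - 1) *
          ((1 / Real.Gamma ((m : ℝ) - α)) *
            ∫ σ in (0:ℝ)..s,
              (s - σ) ^ ((m : ℝ) - α - 1) * iteratedDerivWithin m f (Set.Icc 0 T) σ)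
      = f t - ∑ k ∈ Finset.range m,
          t ^ k / (Nat.factorial k : ℝ) * iteratedDerivWithin k f (Set.Icc 0 T) 0 := by
  intro t ht
  have hm1 : 1 ≤ m := by rw [hm]; exact Nat.one_le_ceil_iff.mpr hα
  have hαm : α < (m : ℝ) := by
    rcases lt_or_eq_of_le (Nat.le_ceil α) with h | h
    · rw [hm]; exact_mod_cast h
    · exact absurd (by rw [hm]; exact_mod_cast h : α = ((m:ℤ):ℝ)) (hni (m : ℤ))
  set g := iteratedDerivWithin m f (Set.Icc 0 T) with hg_def
  have hgc : ContinuousOn g (Set.Icc 0 T) :=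
    hf.continuousOn_iteratedDerivWithin le_rfl (uniqueDiffOn_Icc hT)
  rcases eq_or_lt_of_le ht.1 with h0 | h0
  · -- case t = 0
    rw [← h0]
    rw [intervalIntegral.integral_same, mul_zero,
      Finset.sum_eq_single_of_mem 0 (Finset.mem_range.mpr (by omega))
        (fun k _ hk => by simp [zero_pow hk])]
    simp [iteratedDerivWithin_zero]
  -- main case 0 < t
  set β : ℝ := (m : ℝ) - α - 1 with hβ_def
  set γ : ℝ := α - 1 with hγ_def
  have hβ : (-1 : ℝ) < β := by rw [hβ_def]; linarith
  have hγ : (-1 : ℝ) < γ := by rw [hγ_def]; linarith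
  have hβ1 : (0:ℝ) < β + 1 := by linarith
  -- clamped continuous extension of g
  set G : ℝ → ℝ := fun x => g (min (max x 0) T) with hG_def
  have hmap : ∀ x : ℝ, min (max x 0) T ∈ Set.Icc (0:ℝ) T :=
    fun x => ⟨le_min (le_max_right x 0) hT.le, min_le_right _ _⟩
  have hGc : Continuous G :=
    hgc.comp_continuous ((continuous_id.max continuous_const).min continuous_const) hmap
  have hGg : ∀ x ∈ Set.Icc (0:ℝ) T, G x = g x := by
    intro x hx
    rw [hG_def]
    simp only [max_eq_left hx.1, min_eq_left hx.2]
  obtain ⟨C, hC⟩ : ∃ C : ℝ, ∀ x, ‖G x‖ ≤ C := by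
    obtain ⟨C, hC⟩ := isCompact_Icc.exists_bound_of_continuousOn hgc
    exact ⟨C, fun x => hC _ (hmap x)⟩
  have hC0 : 0 ≤ C := le_trans (norm_nonneg _) (hC 0)
  -- interval integrability of the kernel sections
  have hbase : ∀ s : ℝ, IntervalIntegrable (fun σ => (s - σ) ^ β) volume 0 s := by
    intro s
    have := ((intervalIntegral.intervalIntegrable_rpow' (a := 0) (b := s) hβ).comp_sub_left s).symm
    simpa using this
  have hbaseγ : IntervalIntegrable (fun s => (t - s) ^ γ) volume 0 t := by
    have := ((intervalIntegral.intervalIntegrable_rpow' (a := 0) (b := t) hγ).comp_sub_left t).symm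
    simpa using this
  -- the product-kernel function
  set u : ℝ × ℝ → ℝ :=
    fun p => if p.2 < p.1 then (t - p.1) ^ γ * ((p.1 - p.2) ^ β * G p.2) else 0 with hu_def
  have humeas : Measurable u := by
    refine Measurable.ite (measurableSet_lt measurable_snd measurable_fst) ?_ measurable_const
    fun_prop
  set μ : Measure ℝ := volume.restrict (Set.Ioc 0 t) with hμ_def
  have hind1 : ∀ s : ℝ, (fun σ => u (s, σ))
      = Set.indicator (Set.Iio s) (fun σ => (t - s) ^ γ * ((s - σ) ^ β * G σ)) := by
    intro s; ext σ
    simp [hu_def, Set.indicator_apply]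
  have hind2 : ∀ σ : ℝ, (fun s => u (s, σ))
      = Set.indicator (Set.Ioi σ) (fun s => (t - s) ^ γ * ((s - σ) ^ β * G σ)) := by
    intro σ; ext s
    simp [hu_def, Set.indicator_apply, Set.mem_Ioi]
  have hset1 : ∀ s ∈ Set.Ioc (0:ℝ) t, Set.Iio s ∩ Set.Ioc 0 t = Set.Ioo 0 s := by
    intro s hs; ext σ
    simp only [Set.mem_inter_iff, Set.mem_Iio, Set.mem_Ioc, Set.mem_Ioo]
    constructor
    · rintro ⟨h2, h1, _⟩; exact ⟨h1, h2⟩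
    · rintro ⟨h1, h2⟩; exact ⟨h2, h1, le_trans h2.le hs.2⟩
  have hset2 : ∀ σ ∈ Set.Ioo (0:ℝ) t, Set.Ioi σ ∩ Set.Ioc 0 t = Set.Ioc σ t := by
    intro σ hσ; ext s
    simp only [Set.mem_inter_iff, Set.mem_Ioi, Set.mem_Ioc]
    constructor
    · rintro ⟨h2, _, h3⟩; exact ⟨h2, h3⟩
    · rintro ⟨h1, h2⟩; exact ⟨h1, lt_trans hσ.1 h1, h2⟩
  -- section integrability in σ
  have hsec : ∀ s ∈ Set.Ioc (0:ℝ) t, Integrable (fun σ => u (s, σ)) μ := by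
    intro s hs
    rw [hind1 s, hμ_def, integrable_indicator_iff measurableSet_Iio, MeasureTheory.IntegrableOn,
      Measure.restrict_restrict measurableSet_Iio, hset1 s hs]
    refine Integrable.const_mul ?_ _
    have hInt : IntegrableOn (fun σ => (s - σ) ^ β) (Set.Ioo 0 s) volume := by
      have := (intervalIntegrable_iff_integrableOn_Ioc_of_le hs.1.le).mp (hbase s)
      exact this.mono_set Set.Ioo_subset_Ioc_self
    exact Integrable.bdd_mul hInt (hGc.aestronglyMeasurable.restrict)
      (Filter.Eventually.of_forall fun σ => hC σ) |>.congr
      (Filter.Eventually.of_forall fun σ => by ring)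
  -- value of the inner kernel integral, used for the bound
  have hval : ∀ s ∈ Set.Ioc (0:ℝ) t,
      ∫ σ in (0:ℝ)..s, (s - σ) ^ β = s ^ (β + 1) / (β + 1) := by
    intro s hs
    rw [intervalIntegral.integral_comp_sub_left (fun x => x ^ β) s]
    simp only [sub_self, sub_zero]
    rw [integral_rpow (Or.inl hβ)]
    rw [Real.zero_rpow (by linarith : β + 1 ≠ 0), sub_zero]
  -- integrability of u on the product
  haveI : SFinite μ := by rw [hμ_def]; infer_instance
  have hInt : Integrable u (μ.prod μ) := by
    rw [MeasureTheory.integrable_prod_iff humeas.aestronglyMeasurable]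
    constructor
    · filter_upwards [ae_restrict_mem measurableSet_Ioc] with s hs
      exact hsec s hs
    · refine MeasureTheory.Integrable.mono'
        (g := fun s => (t - s) ^ γ * (C * (t ^ (β + 1) / (β + 1))))
        (((intervalIntegrable_iff_integrableOn_Ioc_of_le h0.le).mp hbaseγ).mul_const _)
        ((humeas.norm.aestronglyMeasurable).integral_prod_right') ?_
      filter_upwards [ae_restrict_mem measurableSet_Ioc] with s hs
      have hnn : 0 ≤ ∫ σ, ‖u (s, σ)‖ ∂μ := integral_nonneg fun σ => norm_nonneg _
      rw [Real.norm_eq_abs, abs_of_nonneg hnn]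
      have hγnn : (0:ℝ) ≤ (t - s) ^ γ := Real.rpow_nonneg (by linarith [hs.2]) _
      -- compute/bound the norm integral
      have h1 : ∫ σ, ‖u (s, σ)‖ ∂μ
          ≤ ∫ σ in Set.Ioo (0:ℝ) s, (t - s) ^ γ * ((s - σ) ^ β * C) := by
        have heq : ∫ σ, ‖u (s, σ)‖ ∂μ
            = ∫ σ in Set.Ioo (0:ℝ) s, ‖(t - s) ^ γ * ((s - σ) ^ β * G σ)‖ := by
          rw [hμ_def]
          have : (fun σ => ‖u (s, σ)‖) = Set.indicator (Set.Iio s)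
              (fun σ => ‖(t - s) ^ γ * ((s - σ) ^ β * G σ)‖) := by
            ext σ
            rw [show u (s, σ) = Set.indicator (Set.Iio s)
              (fun σ => (t - s) ^ γ * ((s - σ) ^ β * G σ)) σ from congrFun (hind1 s) σ]
            exact norm_indicator_eq_indicator_norm _ σ
          rw [this, MeasureTheory.integral_indicator measurableSet_Iio,
            Measure.restrict_restrict measurableSet_Iio, hset1 s hs]
        rw [heq]
        have hIntC : IntegrableOn (fun σ => (t - s) ^ γ * ((s - σ) ^ β * C))
            (Set.Ioo 0 s) volume := by
          refine Integrable.const_mul ?_ _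
          have := (intervalIntegrable_iff_integrableOn_Ioc_of_le hs.1.le).mp (hbase s)
          exact (this.mono_set Set.Ioo_subset_Ioc_self).mul_const _
        have hIntN : IntegrableOn (fun σ => ‖(t - s) ^ γ * ((s - σ) ^ β * G σ)‖)
            (Set.Ioo 0 s) volume := by
          have h2 := hsec s hs
          rw [hind1 s, hμ_def, integrable_indicator_iff measurableSet_Iio,
            MeasureTheory.IntegrableOn, Measure.restrict_restrict measurableSet_Iio,
            hset1 s hs] at h2
          exact h2.norm
        refine setIntegral_mono_on hIntN hIntC measurableSet_Ioo fun σ hσ => ?_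
        rw [norm_mul, norm_mul]
        have hσβ : (0:ℝ) ≤ (s - σ) ^ β := Real.rpow_nonneg (by linarith [hσ.2]) _
        rw [Real.norm_eq_abs, Real.norm_eq_abs, abs_of_nonneg hγnn, abs_of_nonneg hσβ]
        exact mul_le_mul_of_nonneg_left
          (mul_le_mul_of_nonneg_left (hC σ) hσβ) hγnn
      have h2 : ∫ σ in Set.Ioo (0:ℝ) s, (t - s) ^ γ * ((s - σ) ^ β * C)
          = (t - s) ^ γ * C * (s ^ (β + 1) / (β + 1)) := by
        rw [← MeasureTheory.integral_Ioc_eq_integral_Ioo,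
          ← intervalIntegral.integral_of_le hs.1.le]
        rw [show (fun σ => (t - s) ^ γ * ((s - σ) ^ β * C)) = fun σ => ((t-s)^γ * C) * (s - σ) ^ β
          from funext fun σ => by ring]
        rw [intervalIntegral.integral_const_mul, hval s hs]
      refine le_trans h1 ?_
      rw [h2]
      have hst : s ^ (β + 1) ≤ t ^ (β + 1) :=
        Real.rpow_le_rpow hs.1.le hs.2 (by linarith)
      rw [mul_assoc]
      exact mul_le_mul_of_nonneg_left
        (mul_le_mul_of_nonneg_left ((div_le_div_iff_of_pos_right hβ1).mpr hst) hC0) hγnn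
  -- Fubini swap
  have hswap := MeasureTheory.integral_integral_swap (μ := μ) (ν := μ)
    (f := fun s σ => u (s, σ)) hInt
  -- the σ-section evaluation
  have eq1 : ∀ s ∈ Set.Ioc (0:ℝ) t,
      (∫ σ, u (s, σ) ∂μ) = (t - s) ^ γ * ∫ σ in (0:ℝ)..s, (s - σ) ^ β * G σ := by
    intro s hs
    rw [hind1 s, hμ_def, MeasureTheory.integral_indicator measurableSet_Iio,
      Measure.restrict_restrict measurableSet_Iio, hset1 s hs,
      ← MeasureTheory.integral_Ioc_eq_integral_Ioo, ← intervalIntegral.integral_of_le hs.1.le,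
      intervalIntegral.integral_const_mul]
  have eq2 : ∀ σ ∈ Set.Ioo (0:ℝ) t,
      (∫ s, u (s, σ) ∂μ) = (Real.Gamma ((m:ℝ) - α) * Real.Gamma α / Real.Gamma (m:ℝ)) *
        ((t - σ) ^ (m - 1 : ℕ) * G σ) := by
    intro σ hσ
    rw [hind2 σ, hμ_def, MeasureTheory.integral_indicator measurableSet_Ioi,
      Measure.restrict_restrict measurableSet_Ioi, hset2 σ hσ,
      ← intervalIntegral.integral_of_le hσ.2.le]
    have ha : 0 < t - σ := sub_pos.2 hσ.2
    have hb : ∫ s in σ..t, (t - s) ^ γ * (s - σ) ^ β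
        = Real.Gamma ((m:ℝ) - α) * Real.Gamma α / Real.Gamma (m:ℝ) * (t - σ) ^ (m - 1 : ℕ) := by
      have hcomp := intervalIntegral.integral_comp_add_right (a := 0) (b := t - σ)
        (fun s => (t - s) ^ γ * (s - σ) ^ β) σ
      simp only [zero_add, sub_add_cancel] at hcomp
      rw [← hcomp]
      have hpt : ∀ x : ℝ, (t - (x + σ)) ^ γ * (x + σ - σ) ^ β
          = x ^ (((m:ℝ) - α) - 1) * ((t - σ) - x) ^ (α - 1) := by
        intro x
        rw [show t - (x + σ) = (t - σ) - x by ring, show x + σ - σ = x by ring,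
          hβ_def, hγ_def]
        exact mul_comm _ _
      rw [show (fun x : ℝ => (t - (x + σ)) ^ γ * (x + σ - σ) ^ β)
        = fun x : ℝ => x ^ (((m:ℝ) - α) - 1) * ((t - σ) - x) ^ (α - 1) from funext hpt]
      rw [real_beta_scaled (by linarith : (0:ℝ) < (m:ℝ) - α) hα ha]
      rw [show (m:ℝ) - α + α = (m:ℝ) from by ring]
      rw [show (m:ℝ) - 1 = ((m - 1 : ℕ) : ℝ) from by rw [Nat.cast_sub hm1, Nat.cast_one],
        Real.rpow_natCast]
      ring
    calc ∫ s in σ..t, (t - s) ^ γ * ((s - σ) ^ β * G σ)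
        = (∫ s in σ..t, (t - s) ^ γ * (s - σ) ^ β) * G σ := by
          rw [← intervalIntegral.integral_mul_const]
          exact intervalIntegral.integral_congr fun s _ => by ring
      _ = _ := by rw [hb]; ring
  -- the central Fubini identity
  have central : (∫ s in (0:ℝ)..t, (t - s) ^ γ * ∫ σ in (0:ℝ)..s, (s - σ) ^ β * G σ)
      = (Real.Gamma ((m:ℝ) - α) * Real.Gamma α / Real.Gamma (m:ℝ)) *
        ∫ σ in (0:ℝ)..t, (t - σ) ^ (m - 1 : ℕ) * G σ := by
    rw [intervalIntegral.integral_of_le h0.le]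
    calc ∫ s in Set.Ioc (0:ℝ) t, (t - s) ^ γ * ∫ σ in (0:ℝ)..s, (s - σ) ^ β * G σ
        = ∫ s, (∫ σ, u (s, σ) ∂μ) ∂μ :=
          MeasureTheory.setIntegral_congr_fun measurableSet_Ioc fun s hs => (eq1 s hs).symm
      _ = ∫ σ, (∫ s, u (s, σ) ∂μ) ∂μ := hswap
      _ = ∫ σ in Set.Ioo (0:ℝ) t, (∫ s, u (s, σ) ∂μ) :=
          MeasureTheory.integral_Ioc_eq_integral_Ioo
      _ = ∫ σ in Set.Ioo (0:ℝ) t,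
            (Real.Gamma ((m:ℝ) - α) * Real.Gamma α / Real.Gamma (m:ℝ)) *
              ((t - σ) ^ (m - 1 : ℕ) * G σ) :=
          MeasureTheory.setIntegral_congr_fun measurableSet_Ioo fun σ hσ => eq2 σ hσ
      _ = ∫ σ in Set.Ioc (0:ℝ) t,
            (Real.Gamma ((m:ℝ) - α) * Real.Gamma α / Real.Gamma (m:ℝ)) *
              ((t - σ) ^ (m - 1 : ℕ) * G σ) :=
          MeasureTheory.integral_Ioc_eq_integral_Ioo.symm
      _ = ∫ σ in (0:ℝ)..t,
            (Real.Gamma ((m:ℝ) - α) * Real.Gamma α / Real.Gamma (m:ℝ)) *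
              ((t - σ) ^ (m - 1 : ℕ) * G σ) :=
          (intervalIntegral.integral_of_le h0.le).symm
      _ = _ := intervalIntegral.integral_const_mul _ _
  -- rewrite the goal's double integral
  have hkey : (∫ s in (0:ℝ)..t, (t - s) ^ γ *
        ((1 / Real.Gamma ((m:ℝ) - α)) * ∫ σ in (0:ℝ)..s, (s - σ) ^ β * g σ))
      = (1 / Real.Gamma ((m:ℝ) - α)) *
        ∫ s in (0:ℝ)..t, (t - s) ^ γ * ∫ σ in (0:ℝ)..s, (s - σ) ^ β * G σ := by
    rw [← intervalIntegral.integral_const_mul]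
    refine intervalIntegral.integral_congr fun s hs => ?_
    rw [Set.uIcc_of_le h0.le] at hs
    have hrepl : (∫ σ in (0:ℝ)..s, (s - σ) ^ β * g σ)
        = ∫ σ in (0:ℝ)..s, (s - σ) ^ β * G σ := by
      refine intervalIntegral.integral_congr fun σ hσ => ?_
      rw [Set.uIcc_of_le hs.1] at hσ
      rw [hGg σ ⟨hσ.1, le_trans hσ.2 (le_trans hs.2 ht.2)⟩]
    rw [hrepl]; ring
  rw [hkey, central]
  -- Taylor's theorem with integral remainder
  have hf' : ContDiffOn ℝ (((m - 1) + 1 : ℕ)) f (Set.Icc 0 T) := by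
    rw [Nat.sub_add_cancel hm1]; exact hf
  have htay := taylor_integral_remainder' (m - 1) hT ht hf'
  rw [Nat.sub_add_cancel hm1] at htay
  rw [htay]
  have hGg' : (∫ σ in (0:ℝ)..t,
        ((Nat.factorial (m - 1) : ℝ))⁻¹ * (t - σ) ^ (m - 1 : ℕ) * g σ)
      = ((Nat.factorial (m - 1) : ℝ))⁻¹ * ∫ σ in (0:ℝ)..t, (t - σ) ^ (m - 1 : ℕ) * G σ := by
    rw [← intervalIntegral.integral_const_mul]
    refine intervalIntegral.integral_congr fun σ hσ => ?_
    rw [Set.uIcc_of_le h0.le] at hσ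
    rw [hGg σ ⟨hσ.1, le_trans hσ.2 ht.2⟩]
    ring
  rw [hGg']
  have hΓm : Real.Gamma (m:ℝ) = (Nat.factorial (m - 1) : ℝ) := by
    rw [show (m:ℝ) = ((m - 1 : ℕ) : ℝ) + 1 from by rw [Nat.cast_sub hm1, Nat.cast_one]; ring]
    exact Real.Gamma_nat_eq_factorial (m - 1)
  have hΓα : Real.Gamma α ≠ 0 := (Real.Gamma_pos_of_pos hα).ne'
  have hΓmα : Real.Gamma ((m:ℝ) - α) ≠ 0 := (Real.Gamma_pos_of_pos (by linarith)).ne'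
  have hfac : (Nat.factorial (m - 1) : ℝ) ≠ 0 := Nat.cast_ne_zero.mpr (Nat.factorial_ne_zero _)
  rw [hΓm]
  field_simp
end
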